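/- There exists a constant c > 0 with the following property. Let X, Y be real with 3/2 ≤ X ≤ Y and set Q = (1/2)√(XY). Let α ∈ ℝ, and let a ∈ ℤ and q ∈ ℕ, q ≥ 1, be coprime with |qα − a| ≤ Q/(XY). Then |g_q(α)| ≤ c·(X + q)·log q. -/

import Mathlib

open Real

noncomputable def nid (β : ℝ) : ℝ := |β - round β|

lemma nid_nonneg (β : ℝ) : 0 ≤ nid β := abs_nonneg _

lemma nid_le (β : ℝ) (n : ℤ) : nid β ≤ |β - n| := by
  rcases eq_or_ne n (round β) with rfl | h
  · exact le_refl _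
  · have hne : round β - n ≠ 0 := sub_ne_zero.2 (Ne.symm h)
    have h1 : (1 : ℝ) ≤ |(round β : ℝ) - n| := by
      exact_mod_cast Int.one_le_abs hne
    have h2 : |β - round β| ≤ 1/2 := abs_sub_round β
    have h3 : |(round β : ℝ) - n| ≤ |β - n| + |β - round β| := by
      calc |(round β : ℝ) - n| = |(β - n) - (β - round β)| := by ring_nf
        _ ≤ |β - n| + |β - round β| := abs_sub _ _
    unfold nid; linarith

lemma jordan (β : ℝ) : 2 * nid β ≤ |Real.sin (π * β)| := by
  set n := round β
  set t := β - n with ht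
  have hβ : β = t + n := by ring
  have hs : Real.sin (π * β) = (-1)^n * Real.sin (π * t) := by
    rw [hβ]; rw [show π * (t + n) = π * t + n * π by ring, Real.sin_add_int_mul_pi]
  have habs : |Real.sin (π * β)| = |Real.sin (π * t)| := by
    rw [hs, abs_mul]
    have h5 : ((-1:ℝ))^n = 1 ∨ ((-1:ℝ))^n = -1 := by
      rcases Int.even_or_odd n with he | ho
      · left; exact Even.neg_one_zpow he
      · right; exact Odd.neg_one_zpow ho
    rcases h5 with h5 | h5 <;> rw [h5] <;> simp
  have ht2 : |t| ≤ 1/2 := abs_sub_round β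
  have h1 : |Real.sin (π * t)| = Real.sin (π * |t|) := by
    rcases abs_cases t with ⟨h, _⟩ | ⟨h, hneg⟩
    · rw [h]; exact abs_of_nonneg (Real.sin_nonneg_of_nonneg_of_le_pi (by positivity)
        (by nlinarith [Real.pi_pos]))
    · rw [h]
      have h0 : Real.sin (π * -t) = -Real.sin (π * t) := by
        rw [show π * -t = -(π * t) by ring, Real.sin_neg]
      have h4 : 0 ≤ Real.sin (π * -t) := Real.sin_nonneg_of_nonneg_of_le_pi
          (by nlinarith [Real.pi_pos]) (by nlinarith [Real.pi_pos])
      rw [h0]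
      rw [h0] at h4
      exact abs_of_nonpos (by linarith)
  have h2 : 2 / π * (π * |t|) ≤ Real.sin (π * |t|) :=
    Real.mul_le_sin (by positivity) (by nlinarith [Real.pi_pos])
  have hpi : 2 / π * (π * |t|) = 2 * |t| := by
    field_simp
  rw [habs, h1]
  unfold nid
  rw [← ht]
  rw [hpi] at h2
  linarith

lemma expdist (β : ℝ) :
    4 * nid β ≤ ‖Complex.exp (2 * π * Complex.I * β) - 1‖ := by
  have hrw : (2 * π * Complex.I * β) = ((2 * π * β : ℝ) : ℂ) * Complex.I := by
    push_cast; ring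
  rw [hrw]
  have hre : (Complex.exp ((2 * π * β : ℝ) * Complex.I) - 1).re = Real.cos (2*π*β) - 1 := by
    rw [Complex.sub_re, Complex.exp_ofReal_mul_I_re, Complex.one_re]
  have him : (Complex.exp ((2 * π * β : ℝ) * Complex.I) - 1).im = Real.sin (2*π*β) := by
    rw [Complex.sub_im, Complex.exp_ofReal_mul_I_im, Complex.one_im, sub_zero]
  have hsq : (‖Complex.exp ((2 * π * β : ℝ) * Complex.I) - 1‖)^2
      = (2 * |Real.sin (π * β)|)^2 := by
    rw [Complex.sq_norm, Complex.normSq_apply, hre, him]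
    have h2 : Real.cos (2*(π*β)) = 1 - 2 * Real.sin (π*β)^2 := by
      rw [Real.cos_two_mul']; linarith [Real.sin_sq_add_cos_sq (π*β)]
    rw [show 2*π*β = 2*(π*β) by ring] at *
    rw [h2, mul_pow, sq_abs, Real.sin_two_mul]
    nlinarith [Real.sin_sq_add_cos_sq (π*β)]
  have habs : ‖Complex.exp ((2 * π * β : ℝ) * Complex.I) - 1‖
      = 2 * |Real.sin (π * β)| := by
    have h1 : (0:ℝ) ≤ ‖Complex.exp ((2 * π * β : ℝ) * Complex.I) - 1‖ :=
      norm_nonneg _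
    nlinarith [hsq, abs_nonneg (Real.sin (π * β))]
  rw [habs]
  linarith [jordan β]

lemma geom_bound (β : ℝ) (m : ℕ) (h : 0 < nid β) :
    ‖∑ i ∈ Finset.range m, Complex.exp (2 * π * Complex.I * β) ^ (i+1)‖
      ≤ 1 / (2 * nid β) := by
  set z := Complex.exp (2 * π * Complex.I * β) with hz
  have hzabs : ‖z‖ = 1 := by
    rw [hz, show (2 * π * Complex.I * β) = ((2 * π * β : ℝ) : ℂ) * Complex.I by push_cast; ring]
    exact Complex.norm_exp_ofReal_mul_I _
  have hdist : 4 * nid β ≤ ‖z - 1‖ := expdist β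
  have hz1 : z ≠ 1 := by
    intro hh
    rw [hh] at hdist; simp at hdist; linarith
  have hsum : ∑ i ∈ Finset.range m, z ^ (i+1) = z * ((z^m - 1)/(z-1)) := by
    have h0 : ∑ i ∈ Finset.range m, z^(i+1) = (∑ i ∈ Finset.range m, z^i) * z := by
      rw [Finset.sum_mul]
      exact Finset.sum_congr rfl (fun i _ => pow_succ z i)
    rw [h0, geom_sum_eq hz1]
    ring
  rw [hsum]
  rw [norm_mul, hzabs, one_mul, norm_div]
  have h1 : ‖z^m - 1‖ ≤ 2 := by
    calc ‖z^m - 1‖ ≤ ‖z^m‖ + 1 := by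
          simpa using norm_sub_le (z^m) 1
      _ ≤ 2 := by rw [norm_pow, hzabs, one_pow]; norm_num
  have h2 : 0 < ‖z - 1‖ := lt_of_lt_of_le (by linarith) hdist
  rw [div_le_div_iff₀ h2 (by linarith)]
  calc ‖z^m - 1‖ * (2 * nid β) ≤ 2 * (2 * nid β) := by nlinarith
    _ ≤ 1 * ‖z - 1‖ := by linarith

lemma inner_bound (β : ℝ) (M : ℤ) (hM : 1 ≤ M) (h : 0 < nid β) :
    ‖∑ y ∈ Finset.Icc (-M) M,
      if y ≠ 0 then Complex.exp (2 * π * Complex.I * ((β * (y:ℤ) : ℝ) : ℂ)) else 0‖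
      ≤ 1 / nid β := by
  set z := Complex.exp (2 * π * Complex.I * β) with hz
  have hzabs : ‖z‖ = 1 := by
    rw [hz, show (2 * π * Complex.I * (β:ℂ)) = ((2 * π * β : ℝ) : ℂ) * Complex.I by
      push_cast; ring]
    exact Complex.norm_exp_ofReal_mul_I _
  have hzy : ∀ y : ℤ, Complex.exp (2 * π * Complex.I * ((β * (y:ℤ) : ℝ) : ℂ)) = z ^ y := by
    intro y
    rw [hz, ← Complex.exp_int_mul]
    congr 1
    push_cast; ring
  have hsplit : Finset.Icc (-M) M = Finset.Icc (-M) (-1) ∪ Finset.Icc 0 M := by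
    ext x; simp only [Finset.mem_Icc, Finset.mem_union]; omega
  have hdisj : Disjoint (Finset.Icc (-M) (-1)) (Finset.Icc 0 M) := by
    rw [Finset.disjoint_left]
    intro x hx hx'
    simp only [Finset.mem_Icc] at hx hx'
    omega
  rw [hsplit, Finset.sum_union hdisj]
  -- positive part
  have h0M : Finset.Icc (0:ℤ) M = insert 0 (Finset.Icc 1 M) := by
    ext x; simp only [Finset.mem_Icc, Finset.mem_insert]; omega
  have hpos : (∑ y ∈ Finset.Icc (0:ℤ) M,
      if y ≠ 0 then Complex.exp (2 * π * Complex.I * ((β * (y:ℤ) : ℝ) : ℂ)) else 0)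
      = ∑ y ∈ Finset.Icc (1:ℤ) M, z ^ y := by
    rw [h0M, Finset.sum_insert (by simp)]
    simp only [ne_eq, not_true_eq_false, if_false, false_and, zero_add]
    refine Finset.sum_congr rfl (fun y hy => ?_)
    rw [Finset.mem_Icc] at hy
    rw [if_pos (by omega), hzy]
  have hneg : (∑ y ∈ Finset.Icc (-M) (-1),
      if y ≠ 0 then Complex.exp (2 * π * Complex.I * ((β * (y:ℤ) : ℝ) : ℂ)) else 0)
      = ∑ y ∈ Finset.Icc (1:ℤ) M, z ^ (-y) := by
    refine Finset.sum_nbij' (fun y => -y) (fun y => -y) ?_ ?_ ?_ ?_ ?_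
    · intro a ha; simp only [Finset.mem_Icc] at *; omega
    · intro a ha; simp only [Finset.mem_Icc] at *; omega
    · intro a _; ring
    · intro a _; ring
    · intro a ha
      simp only [Finset.mem_Icc] at ha
      rw [if_pos (by omega), hzy]
      simp
  rw [hpos, hneg]
  set T := ∑ y ∈ Finset.Icc (1:ℤ) M, z ^ y with hT
  have hconj : (∑ y ∈ Finset.Icc (1:ℤ) M, z ^ (-y)) = (starRingEnd ℂ) T := by
    rw [hT, map_sum]
    refine Finset.sum_congr rfl (fun y hy => ?_)
    rw [zpow_neg, ← Complex.inv_eq_conj (by rw [norm_zpow, hzabs, one_zpow])]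
  rw [hconj]
  have habsT : ‖T‖ ≤ 1 / (2 * nid β) := by
    have hTr : T = ∑ i ∈ Finset.range M.toNat, z ^ (i+1) := by
      rw [hT]
      refine Finset.sum_nbij' (fun y => (y - 1).toNat) (fun i => (i : ℤ) + 1) ?_ ?_ ?_ ?_ ?_
      · intro a ha; simp only [Finset.mem_Icc, Finset.mem_range] at *; omega
      · intro a ha; simp only [Finset.mem_Icc, Finset.mem_range] at *; omega
      · intro a ha; simp only [Finset.mem_Icc] at ha
        show ((a - 1).toNat : ℤ) + 1 = a; omega
      · intro a _
        show ((((a:ℤ) + 1) - 1).toNat) = a; omega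
      · intro a ha
        simp only [Finset.mem_Icc] at ha
        rw [← zpow_natCast z ((a - 1).toNat + 1)]
        congr 1
        omega
    rw [hTr]
    exact geom_bound β M.toNat h
  calc ‖(starRingEnd ℂ) T + T‖
      ≤ ‖(starRingEnd ℂ) T‖ + ‖T‖ := norm_add_le _ _
    _ = 2 * ‖T‖ := by rw [Complex.norm_conj]; ring
    _ ≤ 2 * (1 / (2 * nid β)) := by linarith
    _ = 1 / nid β := by field_simp

lemma nid_rat_lower (q : ℕ) (hq : 1 ≤ q) (z : ℤ) (r : ℤ) (hr : r = z % q)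
    (hr0 : r ≠ 0) : (min r ((q:ℤ) - r) : ℝ) / q ≤ nid ((z:ℝ) / q) := by
  have hq0 : (0:ℝ) < q := by exact_mod_cast hq
  have hq1 : (1:ℤ) ≤ q := by exact_mod_cast hq
  set n := round ((z:ℝ)/q) with hn
  have hrange : 0 ≤ r ∧ r < q := by
    constructor
    · rw [hr]; exact Int.emod_nonneg z (by omega)
    · rw [hr]; exact Int.emod_lt_of_pos z (by omega)
  obtain ⟨k, hk⟩ : ∃ k, z = q * k + r :=
    ⟨z / q, by rw [hr]; linarith [Int.mul_ediv_add_emod z (q:ℤ)]⟩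
  have key : min r ((q:ℤ) - r) ≤ |z - n * q| := by
    rcases le_or_gt n k with hnk | hnk
    · have : (q:ℤ) * (k - n) ≥ 0 := mul_nonneg (by omega) (by omega)
      have hz : z - n * q = q * (k - n) + r := by rw [hk]; ring
      rw [hz, abs_of_nonneg (by omega)]
      have := min_le_left r ((q:ℤ) - r)
      omega
    · have h1 : (q:ℤ) * (k - n) ≤ -q := by
        have : (k - n : ℤ) ≤ -1 := by omega
        nlinarith
      have hz : z - n * q = q * (k - n) + r := by rw [hk]; ring
      rw [hz, abs_of_nonpos (by omega)]
      have := min_le_right r ((q:ℤ) - r)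
      omega
  have h2 : nid ((z:ℝ)/q) = |(z:ℝ) - n * q| / q := by
    unfold nid
    rw [← hn]
    rw [show (z:ℝ)/q - n = ((z:ℝ) - n * q)/q by field_simp, abs_div, abs_of_pos hq0]
  rw [h2]
  gcongr
  have : ((min r ((q:ℤ) - r) : ℤ) : ℝ) ≤ ((|z - n * q| : ℤ) : ℝ) := by exact_mod_cast key
  calc (min r ((q:ℤ) - r) : ℝ) = ((min r ((q:ℤ) - r) : ℤ) : ℝ) := by push_cast; rfl
    _ ≤ ((|z - n * q| : ℤ) : ℝ) := this
    _ = |(z:ℝ) - n * q| := by push_cast; rfl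

lemma key_x (q : ℕ) (hq : 1 ≤ q) (a x : ℤ) (α : ℝ) (r : ℤ) (hr : r = (a * x) % q)
    (hnd : ¬ ((q:ℤ) ∣ a * x))
    (happ : |(x:ℝ) * (α - (a:ℝ)/q)| ≤ 1/(2*q)) :
    0 < nid (α * x) ∧ 1 / nid (α * x) ≤ 2*q*(1/(r:ℝ) + 1/((q:ℝ) - r)) := by
  have hq0 : (0:ℝ) < q := by exact_mod_cast hq
  have hr0 : r ≠ 0 := by
    rw [hr]
    intro hh
    exact hnd (Int.dvd_of_emod_eq_zero hh)
  have hrange : 0 ≤ r ∧ r < q := by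
    constructor
    · rw [hr]; exact Int.emod_nonneg _ (by omega)
    · rw [hr]; exact Int.emod_lt_of_pos _ (by exact_mod_cast hq)
  have hr1 : (1:ℤ) ≤ r := by omega
  have hqr1 : (1:ℤ) ≤ (q:ℤ) - r := by omega
  set d : ℝ := (min r ((q:ℤ) - r) : ℝ) / q with hd
  have hmin1 : (1:ℝ) ≤ (min r ((q:ℤ) - r) : ℝ) := by exact_mod_cast le_min hr1 hqr1
  have hd1q : 1/(q:ℝ) ≤ d := by rw [hd]; gcongr
  have hdpos : 0 < d := lt_of_lt_of_le (by positivity) hd1q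
  have hlow : d ≤ nid (((a*x : ℤ):ℝ) / q) := nid_rat_lower q hq (a*x) r hr hr0
  have htri : d - 1/(2*q) ≤ nid (α * x) := by
    have h2 : nid (((a*x : ℤ):ℝ) / q) ≤ |((a*x : ℤ):ℝ)/q - round (α * x)| :=
      nid_le _ _
    have h3 : |((a*x : ℤ):ℝ)/q - round (α * x)| ≤
        |α * x - ((a*x : ℤ):ℝ)/q| + |α * x - round (α * x)| := by
      calc |((a*x : ℤ):ℝ)/q - round (α * x)|
          = |(α * x - ((a*x : ℤ):ℝ)/q) + (((a*x : ℤ):ℝ)/q - α * x)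
              + (α * x - round (α * x)) + (((a*x : ℤ):ℝ)/q - α * x)| := by ring_nf
        _ = |(((a*x : ℤ):ℝ)/q - α * x) + (α * x - round (α * x))| := by ring_nf
        _ ≤ |((a*x : ℤ):ℝ)/q - α * x| + |α * x - round (α * x)| := abs_add_le _ _
        _ = |α * x - ((a*x : ℤ):ℝ)/q| + |α * x - round (α * x)| := by
            rw [abs_sub_comm]
    have h5 : |α * x - ((a*x : ℤ):ℝ)/q| = |(x:ℝ) * (α - (a:ℝ)/q)| := by
      congr 1
      push_cast
      field_simp
    have h8 : nid (α * (x:ℝ)) = |α * (x:ℝ) - round (α * (x:ℝ))| := rfl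
    rw [h5] at h3
    linarith
  have hhalf : 1/(2*(q:ℝ)) ≤ d/2 := by
    have he : 1/(2*(q:ℝ)) = (1/(q:ℝ))/2 := by ring
    linarith
  have hge : d/2 ≤ nid (α * x) := by linarith
  have hnidpos : 0 < nid (α * x) := lt_of_lt_of_le (by linarith) hge
  refine ⟨hnidpos, ?_⟩
  have step1 : 1 / nid (α * x) ≤ 2 / d := by
    rw [div_le_div_iff₀ hnidpos hdpos]
    nlinarith
  refine step1.trans ?_
  have h2d : 2 / d = 2 * q / (min r ((q:ℤ) - r) : ℝ) := by
    rw [hd]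
    field_simp
  rw [h2d]
  have hrpos : (0:ℝ) < (r:ℝ) := by exact_mod_cast (by omega : (0:ℤ) < r)
  have hqrpos : (0:ℝ) < (q:ℝ) - (r:ℝ) := by
    have : ((q:ℤ) - r : ℤ) > 0 := by omega
    have h9 : (((q:ℤ) - r : ℤ) : ℝ) > 0 := by exact_mod_cast this
    push_cast at h9
    linarith
  have hA : 2*(q:ℝ)*(1/(r:ℝ) + 1/((q:ℝ)-r)) = 2*q/(r:ℝ) + 2*q/((q:ℝ)-r) := by ring
  have hB : 0 ≤ 2*(q:ℝ)/(r:ℝ) := by positivity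
  have hC : 0 ≤ 2*(q:ℝ)/((q:ℝ)-r) := by positivity
  push_cast
  rcases min_cases (r:ℝ) ((q:ℝ) - r) with ⟨he, _⟩ | ⟨he, _⟩ <;> rw [he] <;> linarith

lemma count_bound (N : ℤ) (hN : 0 ≤ N) (q : ℕ) (hq : 1 ≤ q) (a : ℤ)
    (ha : Int.gcd a q = 1) (r : ℤ) :
    (((Finset.Icc (-N) N).filter (fun x => (a*x) % q = r)).card : ℝ) ≤ 2*(N:ℝ)/q + 1 := by
  have hq0 : (0:ℤ) < q := by exact_mod_cast hq
  have hqr : (0:ℝ) < q := by exact_mod_cast hq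
  set S := (Finset.Icc (-N) N).filter (fun x => (a*x) % q = r) with hS
  have hcard : S.card ≤ (Finset.Icc (0:ℤ) ((2*N)/q)).card := by
    apply Finset.card_le_card_of_injOn (fun x => (x + N) / q)
    · intro x hx
      have hx1 := Finset.mem_Icc.mp (Finset.mem_filter.mp (Finset.mem_coe.mp hx)).1
      rw [Finset.mem_coe, Finset.mem_Icc]
      constructor
      · exact Int.ediv_nonneg (by omega) (by omega)
      · exact Int.ediv_le_ediv hq0 (by omega)
    · intro x₁ h₁ x₂ h₂ heq
      simp only [Finset.mem_coe, hS, Finset.mem_filter] at h₁ h₂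
      have hme : (a * x₁) % q = (a * x₂) % q := by rw [h₁.2, h₂.2]
      have hdvd : (q:ℤ) ∣ a * x₁ - a * x₂ := Int.dvd_of_emod_eq_zero
        (by rw [Int.sub_emod, hme, sub_self, Int.zero_emod])
      have hfac : a * x₁ - a * x₂ = a * (x₁ - x₂) := by ring
      rw [hfac] at hdvd
      have hdx : (q:ℤ) ∣ (x₁ - x₂) := by
        have hg : Int.gcd (q:ℤ) a = 1 := by
          rw [Int.gcd_comm] at ha; exact_mod_cast ha
        exact Int.dvd_of_dvd_mul_right_of_gcd_one hdvd hg
      obtain ⟨k, hk⟩ := hdx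
      change (x₁ + N) / (q:ℤ) = (x₂ + N) / (q:ℤ) at heq
      have hsub : x₁ + N = (x₂ + N) + (q:ℤ) * k := by omega
      rw [hsub] at heq
      have h7 : ((x₂ + N) + (q:ℤ) * k) / q = (x₂ + N)/q + k := by
        rw [mul_comm]
        exact Int.add_mul_ediv_right _ _ (by omega)
      rw [h7] at heq
      have hk0 : k = 0 := by omega
      rw [hk0, mul_zero] at hk
      omega
  have hc2 : ((Finset.Icc (0:ℤ) ((2*N)/q)).card : ℝ) ≤ 2*(N:ℝ)/q + 1 := by
    rw [Int.card_Icc]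
    have hnn : 0 ≤ (2*N)/(q:ℤ) := Int.ediv_nonneg (by omega) (by omega)
    have hKnat : ((2*N)/(q:ℤ) + 1 - 0).toNat = ((2*N)/(q:ℤ)).toNat + 1 := by omega
    rw [hKnat]
    push_cast
    have hle : (((2*N)/(q:ℤ)).toNat : ℝ) ≤ 2*(N:ℝ)/q := by
      rw [le_div_iff₀ hqr]
      have h8 : (2*N)/(q:ℤ) * q ≤ 2*N := Int.ediv_mul_le _ (by omega)
      have h10 : (((2*N)/(q:ℤ)).toNat : ℤ) = (2*N)/(q:ℤ) := Int.toNat_of_nonneg hnn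
      have h11 : (((2*N)/(q:ℤ)).toNat : ℤ) * q ≤ 2*N := by rw [h10]; exact h8
      exact_mod_cast h11
    linarith
  calc (S.card : ℝ) ≤ ((Finset.Icc (0:ℤ) ((2*N)/q)).card : ℝ) := by exact_mod_cast hcard
    _ ≤ _ := hc2

lemma sum_inv_le (q : ℕ) (hq : 1 ≤ q) :
    ∑ r ∈ Finset.Icc (1:ℤ) ((q:ℤ)-1), 1/(r:ℝ) ≤ 1 + Real.log q := by
  rcases eq_or_lt_of_le hq with h1 | h2
  · simp [← h1]
  have hnat : ∑ r ∈ Finset.Icc (1:ℤ) ((q:ℤ)-1), 1/(r:ℝ)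
      = ∑ n ∈ Finset.Icc 1 (q-1), 1/(n:ℝ) := by
    refine Finset.sum_nbij' (fun r => r.toNat) (fun n => (n:ℤ)) ?_ ?_ ?_ ?_ ?_
    · intro x hx; simp only [Finset.mem_Icc] at *; omega
    · intro x hx; simp only [Finset.mem_Icc] at *; omega
    · intro x hx; simp only [Finset.mem_Icc] at hx
      show ((x.toNat : ℤ)) = x; omega
    · intro x hx; simp only [Finset.mem_Icc] at hx
      show ((x:ℤ)).toNat = x; omega
    · intro x hx; simp only [Finset.mem_Icc] at hx
      congr 1
      exact_mod_cast (Int.toNat_of_nonneg (by omega)).symm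
  rw [hnat]
  have hh : ∑ n ∈ Finset.Icc 1 (q-1), 1/(n:ℝ) = (harmonic (q-1) : ℝ) := by
    rw [harmonic_eq_sum_Icc]
    push_cast
    simp [one_div]
  rw [hh]
  refine (harmonic_le_one_add_log (q-1)).trans ?_
  have hq1 : 1 ≤ q - 1 := by omega
  have : Real.log (q-1 : ℕ) ≤ Real.log q := by
    apply Real.log_le_log (by exact_mod_cast hq1)
    exact_mod_cast Nat.sub_le q 1
  linarith

/-- The exponential sum `g_q(α) = ∑_{0 < |x| ≤ X, q ∤ x} ∑_{0 < |y| ≤ Y} e(αxy)`. -/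
noncomputable def g (X Y : ℝ) (q : ℕ) (α : ℝ) : ℂ :=
  ∑ x ∈ Finset.Icc (-⌊X⌋) ⌊X⌋, ∑ y ∈ Finset.Icc (-⌊Y⌋) ⌊Y⌋,
    if x ≠ 0 ∧ ¬ (q : ℤ) ∣ x ∧ y ≠ 0 then
      Complex.exp (2 * Real.pi * Complex.I * (α * x * y : ℝ)) else 0

theorem stmt7 :
    ∃ c > 0, ∀ X Y α : ℝ, ∀ a : ℤ, ∀ q : ℕ, 3 / 2 ≤ X → X ≤ Y → 1 ≤ q →
      Int.gcd a q = 1 → |(q : ℝ) * α - a| ≤ (Real.sqrt (X * Y) / 2) / (X * Y) →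
      ‖g X Y q α‖ ≤ c * (X + q) * Real.log q := by
  refine ⟨24, by norm_num, ?_⟩
  intro X Y α a q hX hXY hq hgcd happ
  rcases eq_or_lt_of_le hq with hq1 | hq2
  · -- q = 1 : g vanishes
    have h0 : g X Y q α = 0 := by
      unfold g
      apply Finset.sum_eq_zero; intro x _
      apply Finset.sum_eq_zero; intro y _
      rw [if_neg]
      rintro ⟨_, h2, _⟩
      exact h2 (by rw [← hq1]; exact_mod_cast one_dvd x)
    rw [h0, ← hq1]
    simp
  -- main case q ≥ 2
  have hq2' : (2:ℕ) ≤ q := hq2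
  have hq0R : (0:ℝ) < q := by positivity
  have hX0 : (0:ℝ) < X := by linarith
  have hY0 : (0:ℝ) < Y := by linarith
  set N := ⌊X⌋ with hNdef
  set M := ⌊Y⌋ with hMdef
  have hN1 : (1:ℤ) ≤ N := by
    rw [hNdef, Int.le_floor]; norm_num; linarith
  have hM1 : (1:ℤ) ≤ M := by
    rw [hMdef, Int.le_floor]; norm_num; linarith
  have hNX : (N:ℝ) ≤ X := Int.floor_le X
  have hN0 : (0:ℤ) ≤ N := by omega
  set s := Real.sqrt (X*Y) with hsdef
  have hs0 : 0 < s := Real.sqrt_pos.mpr (by positivity)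
  have hs2 : s^2 = X*Y := Real.sq_sqrt (by positivity)
  have hXs : X ≤ s := by
    rw [hsdef]
    calc X = Real.sqrt (X^2) := (Real.sqrt_sq hX0.le).symm
      _ ≤ Real.sqrt (X*Y) := Real.sqrt_le_sqrt (by nlinarith)
  have halpha : |α - (a:ℝ)/q| ≤ 1/(2*q*s) := by
    have he : α - (a:ℝ)/q = ((q:ℝ)*α - a)/q := by field_simp
    have he2 : (s/2)/(X*Y) = 1/(2*s) := by
      rw [← hs2]; field_simp
    rw [he, abs_div, abs_of_pos hq0R]
    rw [hsdef] at happ  -- no-op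
    calc |(q:ℝ)*α - a| / q ≤ (1/(2*s))/q := by
          gcongr
          rw [← he2]; exact happ
      _ = 1/(2*q*s) := by ring
  have hg : Int.gcd (q:ℤ) a = 1 := by
    rw [Int.gcd_comm] at hgcd; exact_mod_cast hgcd
  -- pointwise bound
  set P : ℤ → Prop := fun x => x ≠ 0 ∧ ¬ (q:ℤ) ∣ x with hPdef
  set T := (Finset.Icc (-N) N).filter (fun x => x ≠ 0 ∧ ¬ (q:ℤ) ∣ x) with hTdef
  set w : ℤ → ℝ := fun x => 1/(((a*x) % q : ℤ):ℝ) + 1/((q:ℝ) - ((a*x) % q : ℤ)) with hwdef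
  have hpoint : ∀ x ∈ T,
      ‖∑ y ∈ Finset.Icc (-M) M,
        if x ≠ 0 ∧ ¬ (q : ℤ) ∣ x ∧ y ≠ 0 then
          Complex.exp (2 * Real.pi * Complex.I * (α * x * y : ℝ)) else 0‖
        ≤ 2*q*(w x) := by
    intro x hx
    rw [hTdef, Finset.mem_filter, Finset.mem_Icc] at hx
    obtain ⟨⟨hxl, hxr⟩, hx0, hxd⟩ := hx
    have hnd : ¬ ((q:ℤ) ∣ a * x) := fun hd =>
      hxd (Int.dvd_of_dvd_mul_right_of_gcd_one hd hg)
    have hxabs : |(x:ℝ)| ≤ s := by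
      have : |(x:ℝ)| ≤ (N:ℝ) := by
        rw [abs_le]; constructor <;> [exact_mod_cast hxl; exact_mod_cast hxr]
      linarith
    have happx : |(x:ℝ) * (α - (a:ℝ)/q)| ≤ 1/(2*q) := by
      rw [abs_mul]
      calc |(x:ℝ)| * |α - (a:ℝ)/q| ≤ s * (1/(2*q*s)) := by
            apply mul_le_mul hxabs halpha (abs_nonneg _) hs0.le
        _ = 1/(2*q) := by field_simp
    obtain ⟨hpos, hbound⟩ := key_x q hq a x α ((a*x) % q) rfl hnd happx
    have hinner := inner_bound (α * (x:ℝ)) M hM1 hpos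
    have hrw : (∑ y ∈ Finset.Icc (-M) M,
        if x ≠ 0 ∧ ¬ (q : ℤ) ∣ x ∧ y ≠ 0 then
          Complex.exp (2 * Real.pi * Complex.I * (α * x * y : ℝ)) else 0)
        = ∑ y ∈ Finset.Icc (-M) M,
        if y ≠ 0 then Complex.exp (2 * Real.pi * Complex.I * ((α * (x:ℝ)) * (y:ℤ) : ℝ)) else 0 := by
      refine Finset.sum_congr rfl (fun y _ => ?_)
      by_cases hy : y = 0
      · simp [hy]
      · rw [if_pos ⟨hx0, hxd, hy⟩, if_pos hy]
    rw [hrw]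
    exact hinner.trans (by
      rw [hwdef]
      calc 1 / nid (α * x) ≤ 2*q*(1/(((a*x) % q : ℤ):ℝ) + 1/((q:ℝ) - ((a*x) % q : ℤ))) := hbound
        _ = _ := rfl)
  set F : ℤ → ℂ := fun x => ∑ y ∈ Finset.Icc (-M) M,
      if x ≠ 0 ∧ ¬ (q : ℤ) ∣ x ∧ y ≠ 0 then
        Complex.exp (2 * Real.pi * Complex.I * (α * x * y : ℝ)) else 0 with hFdef
  have h1 : ‖g X Y q α‖ ≤ ∑ x ∈ Finset.Icc (-N) N, ‖F x‖ := by
    unfold g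
    exact norm_sum_le _ _
  have h2 : ∑ x ∈ Finset.Icc (-N) N, ‖F x‖ = ∑ x ∈ T, ‖F x‖ := by
    symm
    apply Finset.sum_subset (Finset.filter_subset _ _)
    intro x hx hnx
    have hnp : ¬(x ≠ 0 ∧ ¬ (q:ℤ) ∣ x) := fun hp => hnx (Finset.mem_filter.mpr ⟨hx, hp⟩)
    have hF0 : F x = 0 := by
      rw [hFdef]
      apply Finset.sum_eq_zero
      intro y _
      rw [if_neg]
      rintro ⟨ha1, ha2, _⟩
      exact hnp ⟨ha1, ha2⟩
    rw [hF0, norm_zero]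
  have hmap : ∀ x ∈ T, (a*x) % (q:ℤ) ∈ Finset.Icc (1:ℤ) ((q:ℤ)-1) := by
    intro x hx
    rw [hTdef, Finset.mem_filter] at hx
    have hnd : ¬ ((q:ℤ) ∣ a * x) := fun hd =>
      hx.2.2 (Int.dvd_of_dvd_mul_right_of_gcd_one hd hg)
    have hr0 : (a*x) % (q:ℤ) ≠ 0 := fun hh => hnd (Int.dvd_of_emod_eq_zero hh)
    have hge : 0 ≤ (a*x) % (q:ℤ) := Int.emod_nonneg _ (by positivity)
    have hlt : (a*x) % (q:ℤ) < q := Int.emod_lt_of_pos _ (by positivity)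
    rw [Finset.mem_Icc]
    omega
  have hwposall : ∀ ρ ∈ Finset.Icc (1:ℤ) ((q:ℤ)-1),
      (0:ℝ) < (ρ:ℝ) ∧ (0:ℝ) < (q:ℝ) - (ρ:ℝ) := by
    intro ρ hρ
    rw [Finset.mem_Icc] at hρ
    constructor
    · exact_mod_cast (by omega : (0:ℤ) < ρ)
    · have : ((q:ℤ) - ρ : ℤ) > 0 := by omega
      have h9 : (((q:ℤ) - ρ : ℤ) : ℝ) > 0 := by exact_mod_cast this
      push_cast at h9
      linarith
  have h5 : ∀ ρ ∈ Finset.Icc (1:ℤ) ((q:ℤ)-1),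
      ∑ x ∈ T.filter (fun x => (a*x) % (q:ℤ) = ρ), w x
        ≤ (2*X/q+1) * (1/(ρ:ℝ) + 1/((q:ℝ) - (ρ:ℝ))) := by
    intro ρ hρ
    obtain ⟨hρ1, hρ2⟩ := hwposall ρ hρ
    have hwval : ∀ x ∈ T.filter (fun x => (a*x) % (q:ℤ) = ρ),
        w x = 1/(ρ:ℝ) + 1/((q:ℝ) - (ρ:ℝ)) := by
      intro x hx
      rw [Finset.mem_filter] at hx
      rw [hwdef]
      simp only [hx.2]
    rw [Finset.sum_congr rfl hwval, Finset.sum_const, nsmul_eq_mul]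
    have hcard : ((T.filter (fun x => (a*x) % (q:ℤ) = ρ)).card : ℝ) ≤ 2*X/q+1 := by
      have hsub : T.filter (fun x => (a*x) % (q:ℤ) = ρ)
          ⊆ (Finset.Icc (-N) N).filter (fun x => (a*x) % (q:ℤ) = ρ) := by
        intro x hx
        rw [Finset.mem_filter] at hx ⊢
        rw [hTdef, Finset.mem_filter] at hx
        exact ⟨hx.1.1, hx.2⟩
      have hcb := count_bound N hN0 q hq a hgcd ρ
      have hcc : ((T.filter (fun x => (a*x) % (q:ℤ) = ρ)).card : ℝ)
          ≤ (((Finset.Icc (-N) N).filter (fun x => (a*x) % (q:ℤ) = ρ)).card : ℝ) := by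
        exact_mod_cast Finset.card_le_card hsub
      have hNXdiv : 2*(N:ℝ)/q ≤ 2*X/q := by gcongr
      linarith
    have hwpos : (0:ℝ) ≤ 1/(ρ:ℝ) + 1/((q:ℝ) - (ρ:ℝ)) := by positivity
    exact mul_le_mul_of_nonneg_right hcard hwpos
  have h7 : ∑ ρ ∈ Finset.Icc (1:ℤ) ((q:ℤ)-1), (1/(ρ:ℝ) + 1/((q:ℝ) - (ρ:ℝ)))
      = 2 * ∑ ρ ∈ Finset.Icc (1:ℤ) ((q:ℤ)-1), 1/(ρ:ℝ) := by
    rw [Finset.sum_add_distrib]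
    have hswap : ∑ ρ ∈ Finset.Icc (1:ℤ) ((q:ℤ)-1), 1/((q:ℝ) - (ρ:ℝ))
        = ∑ ρ ∈ Finset.Icc (1:ℤ) ((q:ℤ)-1), 1/(ρ:ℝ) := by
      refine Finset.sum_nbij' (fun ρ => (q:ℤ) - ρ) (fun ρ => (q:ℤ) - ρ) ?_ ?_ ?_ ?_ ?_
      · intro x hx; simp only [Finset.mem_Icc] at *; omega
      · intro x hx; simp only [Finset.mem_Icc] at *; omega
      · intro x hx; show (q:ℤ) - ((q:ℤ) - x) = x; ring
      · intro x hx; show (q:ℤ) - ((q:ℤ) - x) = x; ring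
      · intro x hx
        show 1/((q:ℝ) - (x:ℝ)) = 1/((((q:ℤ) - x : ℤ)):ℝ)
        push_cast
        ring
    rw [hswap]
    ring
  have h8 := sum_inv_le q hq
  have hsumw : ∑ x ∈ T, w x ≤ (2*X/q+1) * (2*(1+Real.log q)) := by
    rw [← Finset.sum_fiberwise_of_maps_to hmap w]
    calc ∑ ρ ∈ Finset.Icc (1:ℤ) ((q:ℤ)-1), ∑ x ∈ T.filter (fun x => (a*x) % (q:ℤ) = ρ), w x
        ≤ ∑ ρ ∈ Finset.Icc (1:ℤ) ((q:ℤ)-1), (2*X/q+1) * (1/(ρ:ℝ) + 1/((q:ℝ) - (ρ:ℝ))) :=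
          Finset.sum_le_sum h5
      _ = (2*X/q+1) * ∑ ρ ∈ Finset.Icc (1:ℤ) ((q:ℤ)-1), (1/(ρ:ℝ) + 1/((q:ℝ) - (ρ:ℝ))) :=
          (Finset.mul_sum _ _ _).symm
      _ = (2*X/q+1) * (2 * ∑ ρ ∈ Finset.Icc (1:ℤ) ((q:ℤ)-1), 1/(ρ:ℝ)) := by rw [h7]
      _ ≤ (2*X/q+1) * (2*(1+Real.log q)) := by
          have hnn : (0:ℝ) ≤ 2*X/q+1 := by positivity
          have h2s : 2 * ∑ ρ ∈ Finset.Icc (1:ℤ) ((q:ℤ)-1), 1/(ρ:ℝ) ≤ 2*(1+Real.log q) := by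
            linarith
          exact mul_le_mul_of_nonneg_left h2s hnn
  have hlogq : Real.log 2 ≤ Real.log q := Real.log_le_log (by norm_num) (by exact_mod_cast hq2')
  have hlog2 : (0.6931471803:ℝ) < Real.log 2 := Real.log_two_gt_d9
  set L := Real.log q with hLdef
  have hL : (1:ℝ)/2 < L := by linarith
  calc ‖g X Y q α‖
      ≤ ∑ x ∈ Finset.Icc (-N) N, ‖F x‖ := h1
    _ = ∑ x ∈ T, ‖F x‖ := h2
    _ ≤ ∑ x ∈ T, 2*q*(w x) := Finset.sum_le_sum hpoint
    _ = 2*q * ∑ x ∈ T, w x := (Finset.mul_sum _ _ _).symm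
    _ ≤ 2*q * ((2*X/q+1) * (2*(1+L))) := by
        apply mul_le_mul_of_nonneg_left _ (by positivity)
        convert hsumw using 3
    _ = (8*X+4*(q:ℝ))*(1+L) := by field_simp; ring
    _ ≤ 8*(X+q)*(3*L) := by
        have e1 : 1+L ≤ 3*L := by linarith
        have e2 : 8*X+4*(q:ℝ) ≤ 8*(X+q) := by linarith
        have e3 : (0:ℝ) ≤ 1+L := by linarith
        have e4 : (0:ℝ) ≤ 8*(X+q) := by linarith
        calc (8*X+4*(q:ℝ))*(1+L) ≤ 8*(X+q)*(1+L) := mul_le_mul_of_nonneg_right e2 e3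
          _ ≤ 8*(X+q)*(3*L) := mul_le_mul_of_nonneg_left e1 e4
    _ ≤ 24*(X+q)*L := by nlinarith
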